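/- For all g ∈ L²[0,1] and all positive integers K: Σ_{k=0}^{K-1} |g_k^K(t)|² = (1/K) Σ_{k=0}^{K-1} |g(t - k/K)|² for almost every t, where g_k^K(t) = Σ_{n∈ℤ} ⟨g, e^{2πi(nK+k)t}⟩ e^{2πi(nK+k)t}. -/

import Mathlib

/- Theorem 6.18: for all `g ∈ L²[0,1]` and all `K`,
`Σ_{k=0}^{K-1} |g_k^K(t)|² = (1/K) Σ_{k=0}^{K-1} |g(t - k/K)|²` almost everywhere. -/

noncomputable section

open MeasureTheory
open scoped ENNReal Real

instance : Fact ((0 : ℝ) < 1) := ⟨one_pos⟩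

/-- Haar (Lebesgue) probability measure on the circle `[0,1)`. -/
abbrev μ01 : Measure (AddCircle (1 : ℝ)) := AddCircle.haarAddCircle

/-- Truncation of an `ℓ²(ℤ)` sequence to a set of coordinates. -/
def truncSeq (A : Set ℤ) (f : lp (fun _ : ℤ => ℂ) 2) : lp (fun _ : ℤ => ℂ) 2 :=
  ⟨A.indicator f, by
    apply memℓp_gen
    refine Summable.of_nonneg_of_le (fun i => by positivity) (fun i => ?_)
      ((lp.memℓp f).summable (by norm_num))
    exact Real.rpow_le_rpow (norm_nonneg _) (norm_indicator_le_norm_self _ _) (by norm_num)⟩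

/-- The orthogonal projection `Q_A` of `L²[0,1]` onto the closed span of
`{e^{2πint}}_{n ∈ A}`. -/
def QA (A : Set ℤ) (f : Lp ℂ 2 μ01) : Lp ℂ 2 μ01 :=
  fourierBasis.repr.symm (truncSeq A (fourierBasis.repr f))

/-- `g_k^K`: the sum of the Fourier series of `g` over the frequencies `nK + k`, `n ∈ ℤ`. -/
def gkK (K k : ℕ) (g : Lp ℂ 2 μ01) : Lp ℂ 2 μ01 :=
  QA {n : ℤ | n % (K : ℤ) = (k : ℤ)} g

-- E and its properties
def E (K : ℕ) (m : ℤ) : ℂ := Complex.exp (2 * Real.pi * Complex.I * m / K)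

lemma E_add (K : ℕ) (m n : ℤ) : E K (m + n) = E K m * E K n := by
  rw [E, E, E, ← Complex.exp_add]; congr 1; push_cast; ring

lemma conj_E (K : ℕ) (m : ℤ) : (starRingEnd ℂ) (E K m) = E K (-m) := by
  rw [E, E, ← Complex.exp_conj]
  congr 1
  push_cast
  simp only [map_div₀, map_mul, map_ofNat, Complex.conj_I, Complex.conj_ofReal,
    map_intCast, map_natCast]
  ring

lemma E_pow (K : ℕ) (m : ℤ) (j : ℕ) : E K (m * j) = E K m ^ j := by
  rw [E, E, ← Complex.exp_nat_mul]; congr 1; push_cast; ring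

lemma E_of_dvd (K : ℕ) (hK : 0 < K) {m : ℤ} (h : (K : ℤ) ∣ m) : E K m = 1 := by
  obtain ⟨c, rfl⟩ := h
  have hKc : (K : ℂ) ≠ 0 := Nat.cast_ne_zero.mpr hK.ne'
  rw [E]
  have : 2 * (Real.pi : ℂ) * Complex.I * ((K : ℤ) * c : ℤ) / K = c * (2 * Real.pi * Complex.I) := by
    push_cast; field_simp
  rw [this, Complex.exp_int_mul_two_pi_mul_I]

lemma E_ne_one (K : ℕ) (hK : 0 < K) {m : ℤ} (h : ¬ (K : ℤ) ∣ m) : E K m ≠ 1 := by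
  intro hcon
  rw [E, Complex.exp_eq_one_iff] at hcon
  obtain ⟨n, hn⟩ := hcon
  apply h
  refine ⟨n, ?_⟩
  have goal : (m : ℂ) = (K : ℂ) * n → m = (K : ℤ) * n := fun h => by exact_mod_cast h
  apply goal
  have hKc : (K : ℂ) ≠ 0 := Nat.cast_ne_zero.mpr hK.ne'
  have h2 : (2 * (Real.pi : ℂ) * Complex.I) ≠ 0 := by
    simp [Real.pi_ne_zero, Complex.I_ne_zero]
  field_simp at hn
  apply mul_left_cancel₀ h2
  linear_combination (2 * (Real.pi : ℂ) * Complex.I) * hn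

lemma E_geom (K : ℕ) (hK : 0 < K) (m : ℤ) :
    ∑ j ∈ Finset.range K, E K (m * j) = if (K : ℤ) ∣ m then (K : ℂ) else 0 := by
  split_ifs with h
  · have : ∀ j ∈ Finset.range K, E K (m * j) = 1 := fun j _ =>
      E_of_dvd K hK (h.mul_right _)
    rw [Finset.sum_congr rfl this]
    simp
  · have hz := E_ne_one K hK h
    simp_rw [E_pow]
    rw [geom_sum_eq hz]
    have : E K m ^ K = 1 := by
      rw [← E_pow, E_of_dvd K hK ⟨m, mul_comm m K⟩]
    rw [this, sub_self, zero_div]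

lemma E_orth (K : ℕ) (hK : 0 < K) {j j' : ℕ} (hj : j < K) (hj' : j' < K) :
    ∑ k ∈ Finset.range K, E K (((j : ℤ) - (j' : ℤ)) * k) = if j = j' then (K : ℂ) else 0 := by
  rw [E_geom K hK]
  congr 1
  simp only [eq_iff_iff]
  constructor
  · intro h
    have := Int.eq_zero_of_abs_lt_dvd h (by
      rw [abs_sub_lt_iff]; constructor <;> [skip; skip] <;> push_cast <;> omega
      )
    omega
  · rintro rfl; simp

lemma norm_sq_eq_re_mul_conj (z : ℂ) : ‖z‖ ^ 2 = (z * (starRingEnd ℂ) z).re := by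
  rw [Complex.mul_conj, Complex.ofReal_re, Complex.sq_norm]

lemma dft_parseval (K : ℕ) (hK : 0 < K) (v : ℕ → ℂ) :
    ∑ k ∈ Finset.range K, ‖(K : ℂ)⁻¹ * ∑ j ∈ Finset.range K, E K ((k : ℤ) * (j : ℤ)) * v j‖ ^ 2
      = (1 / (K : ℝ)) * ∑ j ∈ Finset.range K, ‖v j‖ ^ 2 := by
  have hKc : (K : ℂ) ≠ 0 := Nat.cast_ne_zero.mpr hK.ne'
  set S : ℕ → ℂ := fun k => ∑ j ∈ Finset.range K, E K ((k : ℤ) * (j : ℤ)) * v j with hS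
  have key : ∑ k ∈ Finset.range K, S k * (starRingEnd ℂ) (S k)
      = (K : ℂ) * ∑ j ∈ Finset.range K, v j * (starRingEnd ℂ) (v j) := by
    have expand : ∀ k ∈ Finset.range K, S k * (starRingEnd ℂ) (S k)
        = ∑ j ∈ Finset.range K, ∑ j' ∈ Finset.range K,
            (v j * (starRingEnd ℂ) (v j')) * E K (((j : ℤ) - (j' : ℤ)) * k) := by
      intro k _
      rw [hS, map_sum, Finset.sum_mul_sum]
      refine Finset.sum_congr rfl fun j _ => Finset.sum_congr rfl fun j' _ => ?_
      rw [map_mul, conj_E]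
      have : ((j : ℤ) - (j' : ℤ)) * k = (k : ℤ) * j + -((k : ℤ) * j') := by ring
      rw [this, E_add]
      ring
    rw [Finset.sum_congr rfl expand, Finset.sum_comm]
    rw [Finset.mul_sum]
    refine Finset.sum_congr rfl fun j hj => ?_
    rw [Finset.sum_comm]
    have : ∀ j' ∈ Finset.range K,
        ∑ k ∈ Finset.range K, (v j * (starRingEnd ℂ) (v j')) * E K (((j : ℤ) - (j' : ℤ)) * k)
        = (v j * (starRingEnd ℂ) (v j')) * (if j = j' then (K : ℂ) else 0) := by
      intro j' hj'
      rw [← Finset.mul_sum, E_orth K hK (Finset.mem_range.mp hj) (Finset.mem_range.mp hj')]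
    rw [Finset.sum_congr rfl this]
    simp only [mul_ite, mul_zero]
    rw [Finset.sum_ite_eq (Finset.range K) j (fun j' => v j * (starRingEnd ℂ) (v j') * (K : ℂ))]
    simp only [hj, if_pos]
    ring
  have lhs : ∑ k ∈ Finset.range K, ‖(K : ℂ)⁻¹ * S k‖ ^ 2
      = (∑ k ∈ Finset.range K, ((K : ℂ)⁻¹ * S k) * (starRingEnd ℂ) ((K : ℂ)⁻¹ * S k)).re := by
    rw [Complex.re_sum]
    exact Finset.sum_congr rfl fun k _ => norm_sq_eq_re_mul_conj _
  rw [lhs]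
  have : ∑ k ∈ Finset.range K, ((K : ℂ)⁻¹ * S k) * (starRingEnd ℂ) ((K : ℂ)⁻¹ * S k)
      = Complex.ofReal ((K : ℝ)⁻¹) * ∑ j ∈ Finset.range K, v j * (starRingEnd ℂ) (v j) := by
    have conj_inv : (starRingEnd ℂ) ((K : ℂ)⁻¹) = (K : ℂ)⁻¹ := by
      rw [map_inv₀, Complex.conj_natCast]
    calc ∑ k ∈ Finset.range K, ((K : ℂ)⁻¹ * S k) * (starRingEnd ℂ) ((K : ℂ)⁻¹ * S k)
        = (K : ℂ)⁻¹ * (K : ℂ)⁻¹ * ∑ k ∈ Finset.range K, S k * (starRingEnd ℂ) (S k) := by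
          rw [Finset.mul_sum]
          refine Finset.sum_congr rfl fun k _ => ?_
          rw [map_mul, conj_inv]; ring
      _ = Complex.ofReal ((K : ℝ)⁻¹) * ∑ j ∈ Finset.range K, v j * (starRingEnd ℂ) (v j) := by
          rw [key]; push_cast; field_simp
  rw [this, Complex.re_ofReal_mul, Complex.re_sum]
  rw [one_div]
  congr 1
  exact Finset.sum_congr rfl fun j _ => (norm_sq_eq_re_mul_conj _).symm

def transLp (a : AddCircle (1 : ℝ)) (g : Lp ℂ 2 μ01) : Lp ℂ 2 μ01 :=
  Lp.compMeasurePreserving (fun t => t - a) (measurePreserving_sub_right μ01 a) g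

lemma transLp_coe (a : AddCircle (1 : ℝ)) (g : Lp ℂ 2 μ01) :
    (transLp a g : AddCircle (1 : ℝ) → ℂ) =ᵐ[μ01] fun t => g (t - a) :=
  Lp.coeFn_compMeasurePreserving g _

lemma fourier_pt_add {n : ℤ} (x y : AddCircle (1 : ℝ)) :
    fourier n (x + y) = fourier n x * fourier n y := by
  simp_rw [fourier_apply, smul_add, AddCircle.toCircle_add, Circle.coe_mul]

lemma fourierCoeff_transLp (a : AddCircle (1 : ℝ)) (g : Lp ℂ 2 μ01) (n : ℤ) :
    fourierCoeff (transLp a g : AddCircle (1 : ℝ) → ℂ) n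
      = fourier (-n) a * fourierCoeff (g : AddCircle (1 : ℝ) → ℂ) n := by
  have h1 : fourierCoeff (transLp a g : AddCircle (1 : ℝ) → ℂ) n
      = ∫ t : AddCircle (1 : ℝ), fourier (-n) t • (transLp a g : AddCircle (1 : ℝ) → ℂ) t
          ∂AddCircle.haarAddCircle := rfl
  rw [h1]
  have h2 : ∫ t : AddCircle (1 : ℝ), fourier (-n) t • (transLp a g : AddCircle (1 : ℝ) → ℂ) t
        ∂AddCircle.haarAddCircle
      = ∫ t : AddCircle (1 : ℝ), fourier (-n) t • g (t - a) ∂AddCircle.haarAddCircle := by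
    refine integral_congr_ae ?_
    filter_upwards [transLp_coe a g] with t ht
    rw [ht]
  rw [h2]
  have h3 : ∀ t : AddCircle (1 : ℝ), fourier (-n) t • g (t - a)
      = (fun s => fourier (-n) (s + a) • g s) (t - a) := by
    intro t
    simp only [sub_add_cancel]
  simp_rw [h3]
  rw [(measurePreserving_sub_right μ01 a).integral_comp
    (MeasurableEquiv.subRight a).measurableEmbedding (fun s => fourier (-n) (s + a) • g s)]
  have h4 : ∀ s : AddCircle (1 : ℝ), fourier (-n) (s + a) • g s
      = fourier (-n) a • (fourier (-n) s • g s) := by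
    intro s
    rw [fourier_pt_add]
    simp only [smul_eq_mul]
    ring
  simp_rw [h4]
  rw [integral_smul]
  rfl

lemma fourier_div_eq_E (K : ℕ) (hK : 0 < K) (m : ℤ) (j : ℕ) :
    fourier m ((((j : ℝ) / (K : ℝ) : ℝ)) : AddCircle (1 : ℝ)) = E K (m * j) := by
  rw [fourier_coe_apply, E]
  congr 1
  have hKr : (K : ℝ) ≠ 0 := Nat.cast_ne_zero.mpr hK.ne'
  have hKc : (K : ℂ) ≠ 0 := Nat.cast_ne_zero.mpr hK.ne'
  push_cast
  field_simp

lemma mod_iff_dvd (K : ℕ) (k : ℕ) (hk : k < K) (n : ℤ) :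
    n % (K : ℤ) = (k : ℤ) ↔ (K : ℤ) ∣ ((k : ℤ) - n) := by
  have hkK : (k : ℤ) % K = k := Int.emod_eq_of_lt (by positivity) (by exact_mod_cast hk)
  constructor
  · intro h
    exact ⟨-(n / (K : ℤ)), by linear_combination Int.emod_add_mul_ediv n (K : ℤ) - h⟩
  · intro h
    have h2 : (K : ℤ) ∣ (n - k) := dvd_sub_comm.mp h
    obtain ⟨c, hc⟩ := h2
    have : n = k + K * c := by omega
    rw [this, Int.add_mul_emod_self_left, hkK]

lemma gkK_eq_sum (K : ℕ) (hK : 0 < K) (k : ℕ) (hk : k < K) (g : Lp ℂ 2 μ01) :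
    gkK K k g = (K : ℂ)⁻¹ • ∑ j ∈ Finset.range K,
      E K ((k : ℤ) * (j : ℤ)) • transLp ((((j : ℝ) / (K : ℝ) : ℝ)) : AddCircle (1 : ℝ)) g := by
  have hKc : (K : ℂ) ≠ 0 := Nat.cast_ne_zero.mpr hK.ne'
  apply fourierBasis.repr.injective
  apply lp.ext
  funext n
  simp only [_root_.map_smul, map_sum]
  have hL : (fourierBasis.repr (gkK K k g) : ℤ → ℂ) n
      = if n % (K : ℤ) = (k : ℤ) then (fourierBasis.repr g : ℤ → ℂ) n else 0 := by
    rw [gkK, QA, LinearIsometryEquiv.apply_symm_apply]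
    exact Set.indicator_apply _ _ _
  have hR : ∀ j : ℕ, (fourierBasis.repr
        (transLp ((((j : ℝ) / (K : ℝ) : ℝ)) : AddCircle (1 : ℝ)) g) : ℤ → ℂ) n
      = E K ((-n) * j) * (fourierBasis.repr g : ℤ → ℂ) n := by
    intro j
    rw [fourierBasis_repr, fourierCoeff_transLp, fourierBasis_repr,
      fourier_div_eq_E K hK (-n) j]
  rw [hL, lp.coeFn_smul, Pi.smul_apply, lp.coeFn_sum, Finset.sum_apply]
  simp only [lp.coeFn_smul, Pi.smul_apply, smul_eq_mul]
  rw [Finset.sum_congr rfl (fun j _ => by rw [hR j])]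
  have combine : ∀ j ∈ Finset.range K,
      E K ((k : ℤ) * (j : ℤ)) * (E K ((-n) * j) * (fourierBasis.repr g : ℤ → ℂ) n)
      = E K (((k : ℤ) - n) * j) * (fourierBasis.repr g : ℤ → ℂ) n := by
    intro j _
    have : ((k : ℤ) - n) * j = (k : ℤ) * j + (-n) * j := by ring
    rw [this, E_add]
    ring
  rw [Finset.sum_congr rfl combine, ← Finset.sum_mul, E_geom K hK ((k : ℤ) - n)]
  by_cases h : n % (K : ℤ) = (k : ℤ)
  · rw [if_pos h, if_pos ((mod_iff_dvd K k hk n).mp h)]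
    field_simp
  · rw [if_neg h, if_neg (fun hd => h ((mod_iff_dvd K k hk n).mpr hd))]
    simp

lemma Lp_coeFn_sum {ι : Type*} (s : Finset ι) (f : ι → Lp ℂ 2 μ01) :
    ((∑ i ∈ s, f i : Lp ℂ 2 μ01) : AddCircle (1 : ℝ) → ℂ)
      =ᵐ[μ01] fun t => ∑ i ∈ s, f i t := by
  induction s using Finset.cons_induction with
  | empty => simp; exact Lp.coeFn_zero ℂ 2 μ01
  | cons i s hi ih =>
    rw [Finset.sum_cons]
    filter_upwards [Lp.coeFn_add (f i) (∑ j ∈ s, f j), ih] with t h1 h2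
    rw [h1, Pi.add_apply, h2]
    simp [Finset.sum_cons]

theorem sum_sq_gkK_eq (K : ℕ) (hK : 0 < K) (g : Lp ℂ 2 μ01) :
    ∀ᵐ t ∂μ01,
      ∑ k ∈ Finset.range K, ‖(gkK K k g : AddCircle (1 : ℝ) → ℂ) t‖ ^ 2 =
        (1 / (K : ℝ)) * ∑ k ∈ Finset.range K,
          ‖(g : AddCircle (1 : ℝ) → ℂ)
              (t - (((k : ℝ) / (K : ℝ) : ℝ) : AddCircle (1 : ℝ)))‖ ^ 2 := by
  have hk_ae : ∀ᵐ t ∂μ01, ∀ k ∈ Finset.range K,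
      (gkK K k g : AddCircle (1 : ℝ) → ℂ) t
        = (K : ℂ)⁻¹ * ∑ j ∈ Finset.range K, E K ((k : ℤ) * (j : ℤ)) *
            (g : AddCircle (1 : ℝ) → ℂ)
              (t - (((j : ℝ) / (K : ℝ) : ℝ) : AddCircle (1 : ℝ))) := by
    rw [Filter.eventually_all_finset]
    intro k hk
    have hkK := Finset.mem_range.mp hk
    rw [gkK_eq_sum K hK k hkK g]
    have h3 : ∀ᵐ t ∂μ01, ∀ j ∈ Finset.range K,
        ((E K ((k : ℤ) * (j : ℤ)) •
            transLp ((((j : ℝ) / (K : ℝ) : ℝ)) : AddCircle (1 : ℝ)) g : Lp ℂ 2 μ01)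
          : AddCircle (1 : ℝ) → ℂ) t
          = E K ((k : ℤ) * (j : ℤ)) *
              (g : AddCircle (1 : ℝ) → ℂ)
                (t - (((j : ℝ) / (K : ℝ) : ℝ) : AddCircle (1 : ℝ))) := by
      rw [Filter.eventually_all_finset]
      intro j hj
      filter_upwards [Lp.coeFn_smul (E K ((k : ℤ) * (j : ℤ)))
        (transLp ((((j : ℝ) / (K : ℝ) : ℝ)) : AddCircle (1 : ℝ)) g),
        transLp_coe ((((j : ℝ) / (K : ℝ) : ℝ)) : AddCircle (1 : ℝ)) g] with t ht1 ht2
      rw [ht1, Pi.smul_apply, ht2, smul_eq_mul]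
    filter_upwards [Lp.coeFn_smul ((K : ℂ)⁻¹)
        (∑ j ∈ Finset.range K, E K ((k : ℤ) * (j : ℤ)) •
          transLp ((((j : ℝ) / (K : ℝ) : ℝ)) : AddCircle (1 : ℝ)) g),
      Lp_coeFn_sum (Finset.range K) (fun j => E K ((k : ℤ) * (j : ℤ)) •
          transLp ((((j : ℝ) / (K : ℝ) : ℝ)) : AddCircle (1 : ℝ)) g),
      h3] with t ht1 ht2 ht3
    rw [ht1, Pi.smul_apply, ht2, smul_eq_mul]
    congr 1
    exact Finset.sum_congr rfl ht3
  filter_upwards [hk_ae] with t ht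
  rw [Finset.sum_congr rfl (fun k hk => by rw [ht k hk])]
  exact dft_parseval K hK
    (fun j => (g : AddCircle (1 : ℝ) → ℂ) (t - (((j : ℝ) / (K : ℝ) : ℝ) : AddCircle (1 : ℝ))))
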